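/- Let (S, L) be a total abstract cubic, G_S its reflection group, B₀ the normal closure in G_S of {t_a t_b t_c t_{a'} t_b t_{c'} : (a,b,c) ∈ L, (a',b,c') ∈ L}, and for each i ≥ 0 let Bⁱ be the normal closure in G_S of {t_u t_{u'} : u ∼_i u'}. Suppose x ∼_i x', y ∼_i y', (x,y,z) ∈ L and (x',y',z') ∈ L. Then: (1) the cosets t_z t_{z'} Bⁱ and t_x t_y t_z t_{x'} t_{y'} t_{z'} Bⁱ coincide, i.e. (t_x t_y t_z t_{x'} t_{y'} t_{z'})⁻¹ (t_z t_{z'}) ∈ Bⁱ; (2) t_z t_{z'} ∈ B^{i+1}; and (3) B^{j} ⊆ B₀ for every j ≥ 0. -/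

import Mathlib

/-- The defining relators of the reflection group of an abstract cubic `(S, L)`:
`(t_x)^2` for all `x`, and `(t_x t_y t_z)^2` for all collinear triples `(x,y,z) ∈ L`. -/
def cubicRels (S : Type*) (L : S → S → S → Prop) : Set (FreeGroup S) :=
  {r | (∃ x : S, r = FreeGroup.of x ^ 2) ∨
    ∃ x y z : S, L x y z ∧ r = (FreeGroup.of x * FreeGroup.of y * FreeGroup.of z) ^ 2}

/-- The reflection group `G_S` of an abstract cubic, as a presented group. -/
abbrev ReflGroup (S : Type*) (L : S → S → S → Prop) : Type _ :=
  PresentedGroup (cubicRels S L)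

/-- The generator (reflection) `t_x` of the reflection group. -/
def tgen (S : Type*) (L : S → S → S → Prop) (x : S) : ReflGroup S L :=
  PresentedGroup.of x

/-- The approximating equivalence relations `≈_i` of §3: `≈_0` is equality, and `≈_{i+1}` is the
transitive closure of the relation `∼_{i+1}` (see `simR`). -/
def approxR {S : Type*} (L : S → S → S → Prop) : ℕ → S → S → Prop
  | 0 => Eq
  | i + 1 => Relation.TransGen (fun x x' => x = x' ∨ ∃ u v u' v' : S,
      approxR L i u u' ∧ approxR L i v v' ∧ L u v x ∧ L u' v' x')

/-- The relations `∼_i` of §3: `∼_0` is equality, and `x ∼_{i+1} x'` iff `x = x'` or there are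
`u ≈_i u'`, `v ≈_i v'` with `(u,v,x) ∈ L` and `(u',v',x') ∈ L`. -/
def simR {S : Type*} (L : S → S → S → Prop) : ℕ → S → S → Prop
  | 0 => Eq
  | i + 1 => fun x x' => x = x' ∨ ∃ u v u' v' : S,
      approxR L i u u' ∧ approxR L i v v' ∧ L u v x ∧ L u' v' x'

/-- An equivalence relation `r` on `S` is admissible if on `S/r` the induced collinearity
relation `L/r` (three classes are collinear iff they contain representatives forming a
collinear triple) defines a composition: for all classes `X, Y` there is a unique class `Z`
with `(X,Y,Z) ∈ L/r`. -/
def AdmissibleRel {S : Type*} (L : S → S → S → Prop) (r : S → S → Prop) : Prop :=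
  Equivalence r ∧
  ∀ x y : S, ∃ z : S,
    (∃ x' y' z' : S, r x x' ∧ r y y' ∧ r z z' ∧ L x' y' z') ∧
    ∀ w : S, (∃ x' y' w' : S, r x x' ∧ r y y' ∧ r w w' ∧ L x' y' w') → r z w

/-- The set of generators of the subgroup `B₀ ⊆ G_S`: elements `t_a t_b t_c t_{a'} t_b t_{c'}`
for collinear triples `(a,b,c) ∈ L` and `(a',b,c') ∈ L` sharing the middle point `b`.
`B₀` itself is the normal closure of this set in `G_S`. -/
def B0Gens (S : Type*) (L : S → S → S → Prop) : Set (ReflGroup S L) :=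
  {g | ∃ a b c a' c' : S, L a b c ∧ L a' b c' ∧
    g = tgen S L a * tgen S L b * tgen S L c * tgen S L a' * tgen S L b * tgen S L c'}

/-- The subgroup `Bⁱ ⊆ G_S`: the normal closure of `{t_u t_{u'} : u ∼_i u'}`. -/
def Bn (S : Type*) (L : S → S → S → Prop) (i : ℕ) : Subgroup (ReflGroup S L) :=
  Subgroup.normalClosure {g | ∃ u u' : S, simR L i u u' ∧ g = tgen S L u * tgen S L u'}

section AuxGroup
variable {G : Type*} [Group G]

private lemma inv_self' {a : G} (h : a * a = 1) : a⁻¹ = a :=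
  inv_eq_of_mul_eq_one_right h

private lemma key1 (X Y Z X' Y' Z' : G)
    (hX : X * X = 1) (hY : Y * Y = 1) (hZ : Z * Z = 1)
    (hxx : X * X' = 1) (hyy : Y * Y' = 1)
    (hr : X * Y * Z * (X * Y * Z) = 1) :
    (X * Y * Z * X' * Y' * Z')⁻¹ * (Z * Z') = 1 := by
  have hX' : X' = X := by rw [← inv_eq_of_mul_eq_one_right hxx, inv_self' hX]
  have hY' : Y' = Y := by rw [← inv_eq_of_mul_eq_one_right hyy, inv_self' hY]
  rw [hX', hY']
  have h5 : X * Y * Z * X * Y = Z := by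
    have e : X * Y * Z * X * Y = X * Y * Z * (X * Y * Z) * Z⁻¹ := by group
    rw [e, hr, inv_self' hZ, one_mul]
  rw [h5]
  group

private lemma key3 (A B C U U' : G)
    (hA : A * A = 1) (hB : B * B = 1) (hC : C * C = 1)
    (h1 : B * A * U * B * A * C = 1) (h2 : A * B * U' * A * B * C = 1)
    (r1 : A * B * C * (A * B * C) = 1) (r2 : B * A * C * (B * A * C) = 1) :
    U * U' = 1 := by
  have hU : U = A⁻¹ * B⁻¹ * C⁻¹ * A⁻¹ * B⁻¹ := by
    have e : U = (B * A)⁻¹ * (B * A * U * B * A * C) * (B * A * C)⁻¹ := by group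
    rw [e, h1]; group
  have hU' : U' = B⁻¹ * A⁻¹ * C⁻¹ * B⁻¹ * A⁻¹ := by
    have e : U' = (A * B)⁻¹ * (A * B * U' * A * B * C) * (A * B * C)⁻¹ := by group
    rw [e, h2]; group
  rw [hU, hU', inv_self' hA, inv_self' hB, inv_self' hC]
  have e1 : A * B * C * A * B = C := by
    have e : A * B * C * A * B = A * B * C * (A * B * C) * C⁻¹ := by group
    rw [e, r1, inv_self' hC, one_mul]
  have e2 : B * A * C * B * A = C := by
    have e : B * A * C * B * A = B * A * C * (B * A * C) * C⁻¹ := by group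
    rw [e, r2, inv_self' hC, one_mul]
  calc A * B * C * A * B * (B * A * C * B * A)
      = (A * B * C * A * B) * (B * A * C * B * A) := by group
    _ = C * C := by rw [e1, e2]
    _ = 1 := hC

end AuxGroup

section CubicAux
variable {S : Type*} (L : S → S → S → Prop)

private lemma tgen_sq (x : S) : tgen S L x * tgen S L x = 1 := by
  have hmem : (FreeGroup.of x ^ 2 : FreeGroup S) ∈
      Subgroup.normalClosure (cubicRels S L) :=
    Subgroup.subset_normalClosure (Or.inl ⟨x, rfl⟩)
  have h1 : (QuotientGroup.mk (FreeGroup.of x ^ 2) : ReflGroup S L) = 1 :=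
    (QuotientGroup.eq_one_iff _).mpr hmem
  calc tgen S L x * tgen S L x
      = PresentedGroup.mk (cubicRels S L) (FreeGroup.of x * FreeGroup.of x) :=
        (map_mul (PresentedGroup.mk _) _ _).symm
    _ = PresentedGroup.mk (cubicRels S L) (FreeGroup.of x ^ 2) :=
        congrArg (PresentedGroup.mk _) (pow_two _).symm
    _ = 1 := h1

private lemma tgen_trip {x y z : S} (h : L x y z) :
    tgen S L x * tgen S L y * tgen S L z *
      (tgen S L x * tgen S L y * tgen S L z) = 1 := by
  have hmem : ((FreeGroup.of x * FreeGroup.of y * FreeGroup.of z) ^ 2 : FreeGroup S) ∈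
      Subgroup.normalClosure (cubicRels S L) :=
    Subgroup.subset_normalClosure (Or.inr ⟨x, y, z, h, rfl⟩)
  have h1 : (QuotientGroup.mk ((FreeGroup.of x * FreeGroup.of y * FreeGroup.of z) ^ 2) :
      ReflGroup S L) = 1 := (QuotientGroup.eq_one_iff _).mpr hmem
  calc tgen S L x * tgen S L y * tgen S L z *
        (tgen S L x * tgen S L y * tgen S L z)
      = PresentedGroup.mk (cubicRels S L) ((FreeGroup.of x * FreeGroup.of y * FreeGroup.of z) *
          (FreeGroup.of x * FreeGroup.of y * FreeGroup.of z)) := by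
        simp only [map_mul]; rfl
    _ = PresentedGroup.mk (cubicRels S L)
          ((FreeGroup.of x * FreeGroup.of y * FreeGroup.of z) ^ 2) :=
        congrArg (PresentedGroup.mk _) (pow_two _).symm
    _ = 1 := h1

private lemma simR_le_approxR : ∀ i (u u' : S), simR L i u u' → approxR L i u u'
  | 0, _, _, h => h
  | _ + 1, _, _, h => Relation.TransGen.single h

/-- Core of part (3): generators of `Bʲ` lie in the normal closure of `B0Gens`. -/
private lemma sim_mem_B0 (hsym₁ : ∀ x y z, L x y z → L y x z)
    (htotal : ∀ x y : S, ∃ z : S, L x y z) :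
    ∀ j (u u' : S), simR L j u u' →
      tgen S L u * tgen S L u' ∈ Subgroup.normalClosure (B0Gens S L) := by
  intro j
  induction j with
  | zero =>
    intro u u' h
    cases h
    rw [tgen_sq]
    exact one_mem _
  | succ j ih =>
    -- upgrade the inductive hypothesis from `∼_j` to `≈_j`
    have ihA : ∀ u u', approxR L j u u' →
        tgen S L u * tgen S L u' ∈ Subgroup.normalClosure (B0Gens S L) := by
      cases j with
      | zero =>
        intro u u' h
        cases h
        rw [tgen_sq]
        exact one_mem _
      | succ k =>
        intro u u' h
        induction h with
        | single hrel => exact ih _ _ hrel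
        | tail _ hrel ih2 =>
          rename_i b c _
          have h2 := ih _ _ hrel
          have e : (tgen S L u * tgen S L b) * (tgen S L b * tgen S L c)
              = tgen S L u * (tgen S L b * tgen S L b) * tgen S L c := by group
          rw [tgen_sq, mul_one] at e
          rw [← e]
          exact mul_mem ih2 h2
    intro u u' h
    rcases h with rfl | ⟨a, b, a', b', haa, hbb, hu, hu'⟩
    · rw [tgen_sq]; exact one_mem _
    · obtain ⟨c, hc⟩ := htotal a b'
      set N := Subgroup.normalClosure (B0Gens S L) with hN
      haveI : N.Normal := Subgroup.normalClosure_normal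
      have g1 : tgen S L b * tgen S L a * tgen S L u * tgen S L b' * tgen S L a *
          tgen S L c ∈ N :=
        Subgroup.subset_normalClosure
          ⟨b, a, u, b', c, hsym₁ _ _ _ hu, hsym₁ _ _ _ hc, rfl⟩
      have g2 : tgen S L a' * tgen S L b' * tgen S L u' * tgen S L a * tgen S L b' *
          tgen S L c ∈ N :=
        Subgroup.subset_normalClosure ⟨a', b', u', a, c, hu', hc, rfl⟩
      have haN := ihA a a' haa
      have hbN := ihA b b' hbb
      rw [← QuotientGroup.eq_one_iff]
      -- work in the quotient `G ⧸ N`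
      let f : ReflGroup S L →* (ReflGroup S L) ⧸ N := QuotientGroup.mk' N
      have fmk : ∀ g : ReflGroup S L, (g : (ReflGroup S L) ⧸ N) = f g := fun _ => rfl
      have push_sq : ∀ w : S, f (tgen S L w) * f (tgen S L w) = 1 := by
        intro w; rw [← map_mul, tgen_sq, map_one]
      have push1 : ∀ {g : ReflGroup S L}, g ∈ N → f g = 1 := by
        intro g hg; exact (QuotientGroup.eq_one_iff g).mpr hg
      have hfa : f (tgen S L a') = f (tgen S L a) := by
        have h1 : f (tgen S L a) * f (tgen S L a') = 1 := by
          rw [← map_mul]; exact push1 haN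
        rw [← inv_eq_of_mul_eq_one_right h1, inv_self' (push_sq a)]
      have hfb : f (tgen S L b) = f (tgen S L b') := by
        have h1 : f (tgen S L b) * f (tgen S L b') = 1 := by
          rw [← map_mul]; exact push1 hbN
        rw [← inv_eq_of_mul_eq_one_right h1]
        exact (inv_self' (push_sq b)).symm
      have h1q : f (tgen S L b') * f (tgen S L a) * f (tgen S L u) * f (tgen S L b') *
          f (tgen S L a) * f (tgen S L c) = 1 := by
        have := push1 g1
        simp only [map_mul] at this
        rwa [hfb] at this
      have h2q : f (tgen S L a) * f (tgen S L b') * f (tgen S L u') * f (tgen S L a) *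
          f (tgen S L b') * f (tgen S L c) = 1 := by
        have := push1 g2
        simp only [map_mul] at this
        rwa [hfa] at this
      have r1q : f (tgen S L a) * f (tgen S L b') * f (tgen S L c) *
          (f (tgen S L a) * f (tgen S L b') * f (tgen S L c)) = 1 := by
        have := tgen_trip L hc
        have h2 : f (tgen S L a * tgen S L b' * tgen S L c *
            (tgen S L a * tgen S L b' * tgen S L c)) = f 1 := by rw [this]
        simpa only [map_mul, map_one] using h2
      have r2q : f (tgen S L b') * f (tgen S L a) * f (tgen S L c) *
          (f (tgen S L b') * f (tgen S L a) * f (tgen S L c)) = 1 := by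
        have := tgen_trip L (hsym₁ _ _ _ hc)
        have h2 : f (tgen S L b' * tgen S L a * tgen S L c *
            (tgen S L b' * tgen S L a * tgen S L c)) = f 1 := by rw [this]
        simpa only [map_mul, map_one] using h2
      have main : f (tgen S L u) * f (tgen S L u') = 1 :=
        key3 (f (tgen S L a)) (f (tgen S L b')) (f (tgen S L c))
          (f (tgen S L u)) (f (tgen S L u'))
          (push_sq a) (push_sq b') (push_sq c) h1q h2q r1q r2q
      rw [fmk, map_mul]
      exact main

end CubicAux

/-- Lemma 4.2: if `x ∼_i x'`, `y ∼_i y'`, `(x,y,z) ∈ L` and `(x',y',z') ∈ L`,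
then (1) `t_z t_{z'}` and `t_x t_y t_z t_{x'} t_{y'} t_{z'}` lie in the same coset of `Bⁱ`,
(2) `t_z t_{z'} ∈ B^{i+1}`, and (3) `Bʲ ⊆ B₀` for every `j`. -/
theorem stmt_11 {S : Type*} (L : S → S → S → Prop)
    (hsym₁ : ∀ x y z, L x y z → L y x z)
    (hsym₂ : ∀ x y z, L x y z → L x z y)
    (huniq : ∀ x y z z', L x y z → L x y z' → x ≠ y → z = z')
    (htotal : ∀ x y : S, ∃ z : S, L x y z)
    (i : ℕ) (x y z x' y' z' : S)
    (hx : simR L i x x') (hy : simR L i y y')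
    (hz : L x y z) (hz' : L x' y' z') :
    ((tgen S L x * tgen S L y * tgen S L z *
          tgen S L x' * tgen S L y' * tgen S L z')⁻¹ *
        (tgen S L z * tgen S L z') ∈ Bn S L i) ∧
    (tgen S L z * tgen S L z' ∈ Bn S L (i + 1)) ∧
    (∀ j : ℕ, Bn S L j ≤ Subgroup.normalClosure (B0Gens S L)) := by
  have tsq := tgen_sq L
  haveI : (Bn S L i).Normal := Subgroup.normalClosure_normal
  refine ⟨?_, ?_, ?_⟩
  · -- part (1)
    rw [← QuotientGroup.eq_one_iff]
    let f : ReflGroup S L →* (ReflGroup S L) ⧸ Bn S L i := QuotientGroup.mk' (Bn S L i)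
    show f ((tgen S L x * tgen S L y * tgen S L z *
        tgen S L x' * tgen S L y' * tgen S L z')⁻¹ * (tgen S L z * tgen S L z')) = 1
    simp only [map_mul, map_inv]
    have push_sq : ∀ w : S, f (tgen S L w) * f (tgen S L w) = 1 := by
      intro w; rw [← map_mul, tsq, map_one]
    have push1 : ∀ {g : ReflGroup S L}, g ∈ Bn S L i → f g = 1 := by
      intro g hg; exact (QuotientGroup.eq_one_iff g).mpr hg
    have hxx : f (tgen S L x) * f (tgen S L x') = 1 := by
      rw [← map_mul]
      exact push1 (Subgroup.subset_normalClosure ⟨x, x', hx, rfl⟩)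
    have hyy : f (tgen S L y) * f (tgen S L y') = 1 := by
      rw [← map_mul]
      exact push1 (Subgroup.subset_normalClosure ⟨y, y', hy, rfl⟩)
    have hr : f (tgen S L x) * f (tgen S L y) * f (tgen S L z) *
        (f (tgen S L x) * f (tgen S L y) * f (tgen S L z)) = 1 := by
      have h2 : f (tgen S L x * tgen S L y * tgen S L z *
          (tgen S L x * tgen S L y * tgen S L z)) = f 1 := by rw [tgen_trip L hz]
      simpa only [map_mul, map_one] using h2
    exact key1 _ _ _ _ _ _ (push_sq x) (push_sq y) (push_sq z) hxx hyy hr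
  · -- part (2)
    apply Subgroup.subset_normalClosure
    refine ⟨z, z', ?_, rfl⟩
    show z = z' ∨ _
    exact Or.inr ⟨x, y, x', y', simR_le_approxR L i x x' hx,
      simR_le_approxR L i y y' hy, hz, hz'⟩
  · -- part (3)
    intro j
    haveI : (Subgroup.normalClosure (B0Gens S L)).Normal :=
      Subgroup.normalClosure_normal
    apply Subgroup.normalClosure_le_normal
    rintro g ⟨u, u', huu, rfl⟩
    exact sim_mem_B0 L hsym₁ htotal j u u' huu
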